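/- For any real m×n matrix A there exist an invertible m×m matrix S and an orthogonal n×n matrix T such that S * A * T⁻¹ is the block matrix with an r×r identity block in the top-left and zeros elsewhere, where r = rank A. -/

import Mathlib

open Matrix

open Submodule Set Module in
/-- Extend a linearly independent family in Euclidean space to a full
linearly independent family (indexed by `Fin N`, agreeing on the initial segment). -/
lemma exists_extend_li {N r : ℕ} (hr : r ≤ N)
    (c : Fin r → EuclideanSpace ℝ (Fin N)) (hc : LinearIndependent ℝ c) :
    ∃ w : Fin N → EuclideanSpace ℝ (Fin N),
      (∀ j : Fin r, w (Fin.castLE hr j) = c j) ∧ LinearIndependent ℝ w := by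
  set U : Submodule ℝ (EuclideanSpace ℝ (Fin N)) := Submodule.span ℝ (Set.range c) with hU
  have hUr : finrank ℝ U = r := by
    rw [hU, finrank_span_eq_card hc, Fintype.card_fin]
  have hUc : finrank ℝ (Uᗮ) = N - r := by
    have h1 := Submodule.finrank_add_finrank_orthogonal U
    rw [hUr, finrank_euclideanSpace, Fintype.card_fin] at h1
    omega
  set d := stdOrthonormalBasis ℝ (Uᗮ) with hd
  set d' : Fin (N - r) → EuclideanSpace ℝ (Fin N) :=
    fun j => (d (Fin.cast hUc.symm j) : EuclideanSpace ℝ (Fin N)) with hd'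
  have hdmem : ∀ j, d' j ∈ Uᗮ := fun j => (d (Fin.cast hUc.symm j)).2
  have hd'on : Orthonormal ℝ d' :=
    (d.orthonormal.comp_linearIsometry (Uᗮ).subtypeₗᵢ).comp _
      (fun a b hab => by simpa [Fin.ext_iff] using hab)
  have hLI : LinearIndependent ℝ (Sum.elim c d') := by
    refine hc.sum_type hd'on.linearIndependent ?_
    refine Disjoint.mono_right ?_ (Submodule.orthogonal_disjoint U)
    rw [Submodule.span_le]
    rintro x ⟨j, rfl⟩
    exact hdmem j
  set g : Fin N → Fin r ⊕ Fin (N - r) := fun i =>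
    if h : i.1 < r then Sum.inl ⟨i.1, h⟩ else Sum.inr ⟨i.1 - r, by omega⟩ with hg
  have hginj : Function.Injective g := by
    intro a b hab
    simp only [hg] at hab
    split_ifs at hab <;> simp_all [Fin.ext_iff] <;> omega
  refine ⟨Sum.elim c d' ∘ g, fun j => ?_, hLI.comp g hginj⟩
  simp [hg, Fin.castLE]

open Submodule Set Module in
/-- An orthonormal family indexed by `Fin N` whose tail lies in `Wᗮ`. -/
lemma exists_orthonormal_adapted {N : ℕ} (W : Submodule ℝ (EuclideanSpace ℝ (Fin N)))
    {r : ℕ} (hWr : finrank ℝ W = r) :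
    ∃ v : Fin N → EuclideanSpace ℝ (Fin N), Orthonormal ℝ v ∧
      (∀ i : Fin N, r ≤ i.1 → v i ∈ Wᗮ) := by
  have hrN : r ≤ N := by
    have h0 := Submodule.finrank_le W
    rw [hWr, finrank_euclideanSpace, Fintype.card_fin] at h0
    exact h0
  have hWc : finrank ℝ (Wᗮ) = N - r := by
    have h1 := Submodule.finrank_add_finrank_orthogonal W
    rw [hWr, finrank_euclideanSpace, Fintype.card_fin] at h1
    omega
  set b := stdOrthonormalBasis ℝ W with hb
  set b' : Fin r → EuclideanSpace ℝ (Fin N) :=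
    fun j => (b (Fin.cast hWr.symm j) : EuclideanSpace ℝ (Fin N)) with hb'
  set d := stdOrthonormalBasis ℝ (Wᗮ) with hd
  set d' : Fin (N - r) → EuclideanSpace ℝ (Fin N) :=
    fun j => (d (Fin.cast hWc.symm j) : EuclideanSpace ℝ (Fin N)) with hd'
  have hbmem : ∀ j, b' j ∈ W := fun j => (b (Fin.cast hWr.symm j)).2
  have hdmem : ∀ j, d' j ∈ Wᗮ := fun j => (d (Fin.cast hWc.symm j)).2
  have hb'on : Orthonormal ℝ b' :=
    (b.orthonormal.comp_linearIsometry W.subtypeₗᵢ).comp _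
      (fun a b hab => by simpa [Fin.ext_iff] using hab)
  have hd'on : Orthonormal ℝ d' :=
    (d.orthonormal.comp_linearIsometry (Wᗮ).subtypeₗᵢ).comp _
      (fun a b hab => by simpa [Fin.ext_iff] using hab)
  have hsum : Orthonormal ℝ (Sum.elim b' d') := by
    rw [orthonormal_iff_ite]
    rintro (i | i) (j | j)
    · simpa using orthonormal_iff_ite.mp hb'on i j
    · simpa using Submodule.inner_right_of_mem_orthogonal (hbmem i) (hdmem j)
    · simpa using Submodule.inner_left_of_mem_orthogonal (hbmem j) (hdmem i)
    · simpa using orthonormal_iff_ite.mp hd'on i j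
  set g : Fin N → Fin r ⊕ Fin (N - r) := fun i =>
    if h : i.1 < r then Sum.inl ⟨i.1, h⟩ else Sum.inr ⟨i.1 - r, by omega⟩ with hg
  have hginj : Function.Injective g := by
    intro a b hab
    simp only [hg] at hab
    split_ifs at hab <;> simp_all [Fin.ext_iff] <;> omega
  refine ⟨Sum.elim b' d' ∘ g, hsum.comp g hginj, fun i hi => ?_⟩
  simp only [Function.comp, hg, dif_neg (not_lt.mpr hi)]
  exact hdmem _

theorem smith_like_decomposition {m n : ℕ} (A : Matrix (Fin m) (Fin n) ℝ) :
    ∃ (S : Matrix (Fin m) (Fin m) ℝ) (T : Matrix (Fin n) (Fin n) ℝ),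
      IsUnit S ∧ T * Tᵀ = 1 ∧
      S * A * T⁻¹ =
        Matrix.of (fun (i : Fin m) (j : Fin n) =>
          if (i : ℕ) = (j : ℕ) ∧ (i : ℕ) < A.rank then (1 : ℝ) else 0) := by
  classical
  set r := A.rank with hr
  have hrn : r ≤ n := A.rank_le_width
  have hrm : r ≤ m := A.rank_le_height
  set en := (WithLp.linearEquiv 2 ℝ (Fin n → ℝ)).symm with hen
  set em := (WithLp.linearEquiv 2 ℝ (Fin m → ℝ)).symm with hem
  -- row space of A in euclidean space
  set W : Submodule ℝ (EuclideanSpace ℝ (Fin n)) :=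
    Submodule.span ℝ (Set.range fun i => en (A i)) with hW
  have hWr : Module.finrank ℝ W = r := by
    have h1 : W = Submodule.map
        ((WithLp.linearEquiv 2 ℝ (Fin n → ℝ)).symm : (Fin n → ℝ) →ₗ[ℝ] EuclideanSpace ℝ (Fin n))
        (Submodule.span ℝ (Set.range fun i => A i)) := by
      rw [Submodule.map_span]
      congr 1
      rw [← Set.range_comp]
      rfl
    rw [h1, LinearEquiv.finrank_map_eq]
    have h2 := Matrix.rank_eq_finrank_span_cols Aᵀ
    rw [Matrix.rank_transpose] at h2
    exact h2.symm
  obtain ⟨v, hvon, hvmem⟩ := exists_orthonormal_adapted W hWr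
  set T : Matrix (Fin n) (Fin n) ℝ := Matrix.of fun i j => v i j with hT
  have hTT : T * Tᵀ = 1 := by
    ext i j
    have h := orthonormal_iff_ite.mp hvon i j
    rw [PiLp.inner_apply] at h
    simp only [RCLike.inner_apply, conj_trivial] at h
    simpa [Matrix.mul_apply, Matrix.one_apply, hT, mul_comm] using h
  have hTinv : T⁻¹ = Tᵀ := Matrix.inv_eq_right_inv hTT
  -- the matrix C = A * Tᵀ has zero columns past r
  set C := A * Tᵀ with hC
  have hC0 : ∀ (i : Fin m) (j : Fin n), r ≤ j.1 → C i j = 0 := by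
    intro i j hj
    have h := Submodule.inner_right_of_mem_orthogonal
      (Submodule.subset_span ⟨i, rfl⟩ : en (A i) ∈ W) (hvmem j hj)
    rw [PiLp.inner_apply] at h
    simp only [RCLike.inner_apply, conj_trivial] at h
    simpa [hC, Matrix.mul_apply, mul_comm, hen, hT] using h
  -- rank of C
  have hTdet : IsUnit Tᵀ.det := IsUnit.of_mul_eq_one T.det
    (by rw [mul_comm, ← Matrix.det_mul, hTT, Matrix.det_one])
  have hCrank : C.rank = r := by
    rw [hC, Matrix.rank_mul_eq_left_of_isUnit_det _ _ hTdet]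
  -- the first r columns of C are linearly independent
  set c : Fin r → EuclideanSpace ℝ (Fin m) :=
    fun j => em (fun i => C i (Fin.castLE hrn j)) with hc
  have hcspan : Submodule.span ℝ (Set.range fun j : Fin r => (fun i => C i (Fin.castLE hrn j)))
      = Submodule.span ℝ (Set.range Cᵀ) := by
    apply le_antisymm
    · rw [Submodule.span_le]
      rintro x ⟨j, rfl⟩
      exact Submodule.subset_span ⟨Fin.castLE hrn j, rfl⟩
    · rw [Submodule.span_le]
      rintro x ⟨j, rfl⟩
      by_cases hj : j.1 < r
      · exact Submodule.subset_span ⟨⟨j.1, hj⟩, rfl⟩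
      · have : Cᵀ j = 0 := funext fun i => hC0 i j (not_lt.mp hj)
        rw [this]
        exact Submodule.zero_mem _
  have hcLI : LinearIndependent ℝ c := by
    rw [linearIndependent_iff_card_eq_finrank_span]
    have h1 : Submodule.span ℝ (Set.range c) = Submodule.map
        ((WithLp.linearEquiv 2 ℝ (Fin m → ℝ)).symm : (Fin m → ℝ) →ₗ[ℝ] EuclideanSpace ℝ (Fin m))
        (Submodule.span ℝ (Set.range (fun j : Fin r => (fun i => C i (Fin.castLE hrn j))))) := by
      rw [Submodule.map_span]
      congr 1
      rw [← Set.range_comp]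
      rfl
    rw [Set.finrank, h1, LinearEquiv.finrank_map_eq, hcspan,
      Fintype.card_fin, ← hCrank]
    exact Matrix.rank_eq_finrank_span_cols C
  obtain ⟨w, hwc, hwLI⟩ := exists_extend_li hrm c hcLI
  set M : Matrix (Fin m) (Fin m) ℝ := Matrix.of fun i k => w k i with hM
  have hMunit : IsUnit M := by
    rw [← Matrix.linearIndependent_cols_iff_isUnit]
    have : LinearIndependent ℝ (fun k => (WithLp.linearEquiv 2 ℝ (Fin m → ℝ)) (w k)) :=
      hwLI.map' (WithLp.linearEquiv 2 ℝ (Fin m → ℝ)).toLinearMap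
        (LinearEquiv.ker _)
    exact this
  have hMD : M * (Matrix.of (fun (i : Fin m) (j : Fin n) =>
          if (i : ℕ) = (j : ℕ) ∧ (i : ℕ) < r then (1 : ℝ) else 0)) = C := by
    ext i j
    rw [Matrix.mul_apply]
    by_cases hj : j.1 < r
    · rw [Finset.sum_eq_single (⟨j.1, lt_of_lt_of_le hj hrm⟩ : Fin m)]
      · rw [Matrix.of_apply, if_pos ⟨rfl, hj⟩, mul_one]
        show w (⟨j.1, lt_of_lt_of_le hj hrm⟩ : Fin m) i = C i j
        rw [show (⟨j.1, lt_of_lt_of_le hj hrm⟩ : Fin m) = Fin.castLE hrm ⟨j.1, hj⟩ from rfl,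
          hwc ⟨j.1, hj⟩]
        rfl
      · intro k _ hk
        have hne : ¬ ((k : ℕ) = (j : ℕ) ∧ (k : ℕ) < r) := by
          rintro ⟨h1, -⟩; exact hk (by ext; exact h1)
        rw [Matrix.of_apply, if_neg hne, mul_zero]
      · intro h; exact absurd (Finset.mem_univ _) h
    · have h0 : ∀ k : Fin m, M i k *
          (if (k : ℕ) = (j : ℕ) ∧ (k : ℕ) < r then (1 : ℝ) else 0) = 0 := by
        intro k
        have hne : ¬ ((k : ℕ) = (j : ℕ) ∧ (k : ℕ) < r) := by
          rintro ⟨h1, h2⟩; omega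
        rw [if_neg hne, mul_zero]
      exact (Finset.sum_eq_zero fun k _ => h0 k).trans (hC0 i j (not_lt.mp hj)).symm
  refine ⟨M⁻¹, T, ?_, hTT, ?_⟩
  · rw [Matrix.isUnit_iff_isUnit_det _, Matrix.det_nonsing_inv]
    exact isUnit_ringInverse.mpr ((Matrix.isUnit_iff_isUnit_det M).mp hMunit)
  · rw [hTinv, Matrix.mul_assoc, ← hC, ← hMD, ← Matrix.mul_assoc,
      Matrix.nonsing_inv_mul M ((Matrix.isUnit_iff_isUnit_det M).mp hMunit), Matrix.one_mul]
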